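/- Let (X,d,μ) be a metric measure space with sup_x μ(B(x,r)) ≤ Ce^{κr}, and let K_p : X × X → ℂ satisfy |K_p(x,x')| ≤ C₁ p^{N} e^{-μ₀√p d(x,x')} for some N, μ₀ > 0. Then for any 0 < μ₁ < μ₀ there is p₀ such that for p > p₀, α ∈ ℝ with |α| ≤ μ₁√p, and y ∈ X, the conjugated operator with kernel e^{α d(x,y)}K_p(x,x')e^{-α d(x',y)} is bounded on L²(X,μ) with norm at most C₂ p^{N} for C₂ independent of p, α, y. -/

import Mathlib

open MeasureTheory ENNReal NNReal

lemma expint_bound {X : Type*} [MetricSpace X] [MeasurableSpace X] [BorelSpace X]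
    (μ : Measure X) (C κ : ℝ) (hC : 0 < C)
    (hvol : ∀ (x : X) (r : ℝ), 0 < r →
      μ (Metric.ball x r) ≤ ENNReal.ofReal (C * Real.exp (κ * r)))
    (a : ℝ) (ha : κ + 1 ≤ a) (hκ : 0 < κ) (x : X) :
    ∫⁻ x', ENNReal.ofReal (Real.exp (-a * dist x x')) ∂μ ≤
      ENNReal.ofReal (C * Real.exp κ / (1 - Real.exp (-1))) := by
  have ha0 : 0 < a := lt_of_lt_of_le (by linarith) ha
  set A : ℕ → Set X := fun n => Metric.ball x (n + 1) \ Metric.ball x n with hA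
  have hcover : (Set.univ : Set X) ⊆ ⋃ n, A n := by
    intro x' _
    refine Set.mem_iUnion.2 ⟨⌊dist x' x⌋₊, ?_, ?_⟩
    · refine (Metric.mem_ball).2 ?_
      push_cast
      exact Nat.lt_floor_add_one _
    · simp only [Metric.mem_ball, not_lt]
      exact Nat.floor_le dist_nonneg
  calc ∫⁻ x', ENNReal.ofReal (Real.exp (-a * dist x x')) ∂μ
      ≤ ∫⁻ x' in ⋃ n, A n, ENNReal.ofReal (Real.exp (-a * dist x x')) ∂μ := by
        rw [← setLIntegral_univ]
        exact lintegral_mono_set hcover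
    _ ≤ ∑' n, ∫⁻ x' in A n, ENNReal.ofReal (Real.exp (-a * dist x x')) ∂μ :=
        lintegral_iUnion_le _ _
    _ ≤ ∑' n : ℕ, ENNReal.ofReal ((C * Real.exp κ) * Real.exp (κ - a) ^ n) := by
        refine ENNReal.tsum_le_tsum fun n => ?_
        have h1 : ∫⁻ x' in A n, ENNReal.ofReal (Real.exp (-a * dist x x')) ∂μ ≤
            ∫⁻ _ in A n, ENNReal.ofReal (Real.exp (-a * n)) ∂μ := by
          refine setLIntegral_mono (by fun_prop) fun x' hx' => ?_
          refine ENNReal.ofReal_le_ofReal (Real.exp_le_exp.2 ?_)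
          have : (n : ℝ) ≤ dist x x' := by
            have := hx'.2
            simp only [Metric.mem_ball, not_lt] at this
            rwa [dist_comm]
          nlinarith
        refine h1.trans ?_
        rw [setLIntegral_const]
        have h2 : μ (A n) ≤ ENNReal.ofReal (C * Real.exp (κ * (n + 1))) :=
          le_trans (measure_mono Set.diff_subset) (hvol x (n + 1) (by positivity))
        calc ENNReal.ofReal (Real.exp (-a * n)) * μ (A n)
            ≤ ENNReal.ofReal (Real.exp (-a * n)) * ENNReal.ofReal (C * Real.exp (κ * (n + 1))) :=
              mul_le_mul_right h2 _
          _ = ENNReal.ofReal (Real.exp (-a * n) * (C * Real.exp (κ * (n + 1)))) :=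
              (ENNReal.ofReal_mul (Real.exp_nonneg _)).symm
          _ ≤ ENNReal.ofReal ((C * Real.exp κ) * Real.exp (κ - a) ^ n) := by
              refine ENNReal.ofReal_le_ofReal (le_of_eq ?_)
              have e1 : Real.exp (-a * n) * (C * Real.exp (κ * (n + 1))) =
                  C * Real.exp (-a * n + κ * (n + 1)) := by rw [Real.exp_add]; ring
              have e2 : (C * Real.exp κ) * Real.exp (κ - a) ^ n =
                  C * Real.exp (κ + n * (κ - a)) := by
                rw [← Real.exp_nat_mul, mul_assoc, ← Real.exp_add]
              rw [e1, e2]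
              congr 1
              ring
    _ ≤ ENNReal.ofReal (C * Real.exp κ / (1 - Real.exp (-1))) := by
        have hr0 : (0:ℝ) ≤ Real.exp (κ - a) := Real.exp_nonneg _
        have hr1 : Real.exp (κ - a) ≤ Real.exp (-1) := Real.exp_le_exp.2 (by linarith)
        have hrlt : Real.exp (κ - a) < 1 :=
          lt_of_le_of_lt hr1 (Real.exp_lt_one_iff.2 (by norm_num))
        have hsum : Summable (fun n : ℕ => (C * Real.exp κ) * Real.exp (κ - a) ^ n) :=
          (summable_geometric_of_lt_one hr0 hrlt).mul_left _
        rw [← ENNReal.ofReal_tsum_of_nonneg (fun n => by positivity) hsum]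
        refine ENNReal.ofReal_le_ofReal ?_
        rw [_root_.tsum_mul_left, tsum_geometric_of_lt_one hr0 hrlt]
        rw [div_eq_mul_inv]
        have h1e : (0:ℝ) < 1 - Real.exp (-1) := by
          have := Real.exp_lt_one_iff.2 (show (-1:ℝ) < 0 by norm_num); linarith
        have : (1 - Real.exp (κ - a))⁻¹ ≤ (1 - Real.exp (-1))⁻¹ := by
          apply inv_anti₀ h1e; linarith
        have hCk : (0:ℝ) ≤ C * Real.exp κ := by positivity
        exact mul_le_mul_of_nonneg_left this hCk


set_option maxHeartbeats 2000000 in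
lemma schur_test {X : Type*} [MetricSpace X] [MeasurableSpace X] [BorelSpace X]
    (μ : Measure X) [SigmaFinite μ]
    (k : X → X → ℂ) (hk : Measurable (Function.uncurry k))
    (M a S : ℝ) (hM : 0 ≤ M) (hS : 0 ≤ S)
    (hbound : ∀ x x', ‖k x x'‖ ≤ M * Real.exp (-a * dist x x'))
    (hSb : ∀ x : X, ∫⁻ x', ENNReal.ofReal (Real.exp (-a * dist x x')) ∂μ ≤ ENNReal.ofReal S)
    (f : X → ℂ) (hf : MemLp f 2 μ) :
    MemLp (fun x => ∫ x', k x x' * f x' ∂μ) 2 μ ∧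
    eLpNorm (fun x => ∫ x', k x x' * f x' ∂μ) 2 μ ≤
      ENNReal.ofReal (M * S) * eLpNorm f 2 μ := by
  -- reduce to strongly measurable f
  obtain ⟨g, hg, hfg⟩ : ∃ g, StronglyMeasurable g ∧ f =ᵐ[μ] g :=
    ⟨hf.1.mk f, hf.1.stronglyMeasurable_mk, hf.1.ae_eq_mk⟩
  have hTfg : (fun x => ∫ x', k x x' * f x' ∂μ) = (fun x => ∫ x', k x x' * g x' ∂μ) := by
    funext x
    exact integral_congr_ae (hfg.mono fun x' h => by simp only [h])
  have hgL : MemLp g 2 μ := hf.ae_eq hfg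
  have hnormfg : eLpNorm f 2 μ = eLpNorm g 2 μ := eLpNorm_congr_ae hfg
  rw [hTfg, hnormfg]
  clear hTfg hnormfg hfg hf f
  have hgm : Measurable g := hg.measurable
  -- notation
  set W : X → X → ℝ≥0∞ := fun x x' => (‖k x x'‖₊ : ℝ≥0∞) with hWdef
  set F : X → ℝ≥0∞ := fun x' => (‖g x'‖₊ : ℝ≥0∞) with hF
  have hWmeas : Measurable (fun p : X × X => W p.1 p.2) := hk.nnnorm.coe_nnreal_ennreal
  have hWx : ∀ x, Measurable fun x' => W x x' := fun x =>
    ((hk.comp measurable_prodMk_left).nnnorm.coe_nnreal_ennreal : _)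
  have hWx' : ∀ x', Measurable (fun x => W x x') := fun x' =>
    ((hk.comp measurable_prodMk_right).nnnorm.coe_nnreal_ennreal : _)
  have hFmeas : Measurable F := hgm.nnnorm.coe_nnreal_ennreal
  have hF2meas : Measurable (fun x' => F x' ^ (2:ℝ)) :=
    ENNReal.continuous_rpow_const.measurable.comp hFmeas
  have hMS : (0:ℝ) ≤ M * S := mul_nonneg hM hS
  -- pointwise bound on the kernel
  have hWb : ∀ x x', W x x' ≤ ENNReal.ofReal M *
      ENNReal.ofReal (Real.exp (-a * dist x x')) := by
    intro x x'
    show (‖k x x'‖₊ : ℝ≥0∞) ≤ _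
    rw [← enorm_eq_nnnorm, ← ofReal_norm, ← ENNReal.ofReal_mul hM]
    exact ENNReal.ofReal_le_ofReal (hbound x x')
  -- row and column sums
  have hrow : ∀ x, ∫⁻ x', W x x' ∂μ ≤ ENNReal.ofReal (M * S) := by
    intro x
    calc ∫⁻ x', W x x' ∂μ
        ≤ ∫⁻ x', ENNReal.ofReal M * ENNReal.ofReal (Real.exp (-a * dist x x')) ∂μ :=
          lintegral_mono (hWb x)
      _ = ENNReal.ofReal M * ∫⁻ x', ENNReal.ofReal (Real.exp (-a * dist x x')) ∂μ :=
          lintegral_const_mul' _ _ ENNReal.ofReal_ne_top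
      _ ≤ ENNReal.ofReal M * ENNReal.ofReal S := mul_le_mul_right (hSb x) _
      _ = ENNReal.ofReal (M * S) := (ENNReal.ofReal_mul hM).symm
  have hcol : ∀ x', ∫⁻ x, W x x' ∂μ ≤ ENNReal.ofReal (M * S) := by
    intro x'
    calc ∫⁻ x, W x x' ∂μ
        ≤ ∫⁻ x, ENNReal.ofReal M * ENNReal.ofReal (Real.exp (-a * dist x' x)) ∂μ := by
          refine lintegral_mono fun x => ?_
          rw [dist_comm x' x]; exact hWb x x'
      _ = ENNReal.ofReal M * ∫⁻ x, ENNReal.ofReal (Real.exp (-a * dist x' x)) ∂μ :=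
          lintegral_const_mul' _ _ ENNReal.ofReal_ne_top
      _ ≤ ENNReal.ofReal M * ENNReal.ofReal S := mul_le_mul_right (hSb x') _
      _ = ENNReal.ofReal (M * S) := (ENNReal.ofReal_mul hM).symm
  -- Cauchy-Schwarz step
  have hCS : ∀ x, ∫⁻ x', W x x' * F x' ∂μ ≤
      ENNReal.ofReal (M * S) ^ ((1:ℝ)/2) * (∫⁻ x', W x x' * F x' ^ (2:ℝ) ∂μ) ^ ((1:ℝ)/2) := by
    intro x
    have h2 : Real.HolderConjugate 2 2 := Real.HolderConjugate.two_two
    have hm1 : Measurable (fun x' => W x x' ^ ((1:ℝ)/2)) :=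
      ENNReal.continuous_rpow_const.measurable.comp (hWx x)
    have key := ENNReal.lintegral_mul_le_Lp_mul_Lq μ h2
      (f := fun x' => W x x' ^ ((1:ℝ)/2)) (g := fun x' => W x x' ^ ((1:ℝ)/2) * F x')
      hm1.aemeasurable (hm1.mul hFmeas).aemeasurable
    have e1 : ∀ x', W x x' ^ ((1:ℝ)/2) * (W x x' ^ ((1:ℝ)/2) * F x') = W x x' * F x' := by
      intro x'
      rw [← mul_assoc, ← ENNReal.rpow_add_of_nonneg _ _ (by norm_num) (by norm_num)]
      norm_num
    have e2 : ∀ x', (W x x' ^ ((1:ℝ)/2)) ^ (2:ℝ) = W x x' := by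
      intro x'
      rw [← ENNReal.rpow_mul]
      norm_num
    have e3 : ∀ x', (W x x' ^ ((1:ℝ)/2) * F x') ^ (2:ℝ) = W x x' * F x' ^ (2:ℝ) := by
      intro x'
      rw [ENNReal.mul_rpow_of_nonneg _ _ (by norm_num : (0:ℝ) ≤ 2), e2]
    calc ∫⁻ x', W x x' * F x' ∂μ
        = ∫⁻ x', (fun x' => W x x' ^ ((1:ℝ)/2)) x' * (fun x' => W x x' ^ ((1:ℝ)/2) * F x') x' ∂μ := by
          simp only [← e1]
      _ ≤ (∫⁻ x', (W x x' ^ ((1:ℝ)/2)) ^ (2:ℝ) ∂μ) ^ ((1:ℝ)/2) *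
          (∫⁻ x', (W x x' ^ ((1:ℝ)/2) * F x') ^ (2:ℝ) ∂μ) ^ ((1:ℝ)/2) := key
      _ ≤ ENNReal.ofReal (M * S) ^ ((1:ℝ)/2) * (∫⁻ x', W x x' * F x' ^ (2:ℝ) ∂μ) ^ ((1:ℝ)/2) := by
          gcongr with x'
          · simp only [e2]; exact hrow x
          · rw [e3]
  -- the operator and its measurability
  set T : X → ℂ := fun x => ∫ x', k x x' * g x' ∂μ with hT
  have hTmeas : StronglyMeasurable T :=
    MeasureTheory.StronglyMeasurable.integral_prod_right'
      (f := fun p : X × X => k p.1 p.2 * g p.2)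
      (hk.mul (hgm.comp measurable_snd)).stronglyMeasurable
  have hTb : ∀ x, (‖T x‖₊ : ℝ≥0∞) ≤ ∫⁻ x', W x x' * F x' ∂μ := by
    intro x
    refine (enorm_integral_le_lintegral_enorm _).trans (le_of_eq ?_)
    congr 1
    funext x'
    rw [enorm_eq_nnnorm, nnnorm_mul, ENNReal.coe_mul]
  -- square-integral bound
  have hprodmeas : Measurable (fun p : X × X => W p.1 p.2 * F p.2 ^ (2:ℝ)) :=
    hWmeas.mul (hF2meas.comp measurable_snd)
  have key2 : ∫⁻ x, (‖T x‖₊ : ℝ≥0∞) ^ (2:ℝ) ∂μ ≤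
      ENNReal.ofReal (M * S) ^ (2:ℝ) * ∫⁻ x', F x' ^ (2:ℝ) ∂μ := by
    have step1 : ∀ x, (‖T x‖₊ : ℝ≥0∞) ^ (2:ℝ) ≤
        ENNReal.ofReal (M * S) * ∫⁻ x', W x x' * F x' ^ (2:ℝ) ∂μ := by
      intro x
      have h1 : (‖T x‖₊ : ℝ≥0∞) ≤
          ENNReal.ofReal (M * S) ^ ((1:ℝ)/2) * (∫⁻ x', W x x' * F x' ^ (2:ℝ) ∂μ) ^ ((1:ℝ)/2) :=
        (hTb x).trans (hCS x)
      calc (‖T x‖₊ : ℝ≥0∞) ^ (2:ℝ)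
          ≤ (ENNReal.ofReal (M * S) ^ ((1:ℝ)/2) *
              (∫⁻ x', W x x' * F x' ^ (2:ℝ) ∂μ) ^ ((1:ℝ)/2)) ^ (2:ℝ) :=
            ENNReal.rpow_le_rpow h1 (by norm_num)
        _ = ENNReal.ofReal (M * S) * ∫⁻ x', W x x' * F x' ^ (2:ℝ) ∂μ := by
            rw [ENNReal.mul_rpow_of_nonneg _ _ (by norm_num : (0:ℝ) ≤ 2),
              ← ENNReal.rpow_mul, ← ENNReal.rpow_mul]
            norm_num
    calc ∫⁻ x, (‖T x‖₊ : ℝ≥0∞) ^ (2:ℝ) ∂μ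
        ≤ ∫⁻ x, ENNReal.ofReal (M * S) * ∫⁻ x', W x x' * F x' ^ (2:ℝ) ∂μ ∂μ :=
          lintegral_mono step1
      _ = ENNReal.ofReal (M * S) * ∫⁻ x, ∫⁻ x', W x x' * F x' ^ (2:ℝ) ∂μ ∂μ :=
          lintegral_const_mul' _ _ ENNReal.ofReal_ne_top
      _ = ENNReal.ofReal (M * S) * ∫⁻ x', (∫⁻ x, W x x' ∂μ) * F x' ^ (2:ℝ) ∂μ := by
          congr 1
          rw [lintegral_lintegral_swap hprodmeas.aemeasurable]
          congr 1
          funext x'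
          rw [lintegral_mul_const _ (hWx' x')]
      _ ≤ ENNReal.ofReal (M * S) * ∫⁻ x', ENNReal.ofReal (M * S) * F x' ^ (2:ℝ) ∂μ := by
          refine mul_le_mul_right (lintegral_mono fun x' => ?_) _
          exact mul_le_mul_left (hcol x') _
      _ = ENNReal.ofReal (M * S) ^ (2:ℝ) * ∫⁻ x', F x' ^ (2:ℝ) ∂μ := by
          rw [lintegral_const_mul' _ _ ENNReal.ofReal_ne_top, ← mul_assoc,
            ENNReal.rpow_two, sq]
  -- conclude
  have hnormT : eLpNorm T 2 μ ≤ ENNReal.ofReal (M * S) * eLpNorm g 2 μ := by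
    rw [eLpNorm_eq_lintegral_rpow_enorm_toReal (by norm_num) (by norm_num),
      eLpNorm_eq_lintegral_rpow_enorm_toReal (by norm_num) (by norm_num)]
    simp only [ENNReal.toReal_ofNat]
    calc (∫⁻ x, (‖T x‖₊ : ℝ≥0∞) ^ (2:ℝ) ∂μ) ^ ((1:ℝ)/2)
        ≤ (ENNReal.ofReal (M * S) ^ (2:ℝ) * ∫⁻ x', F x' ^ (2:ℝ) ∂μ) ^ ((1:ℝ)/2) :=
          ENNReal.rpow_le_rpow key2 (by norm_num)
      _ = ENNReal.ofReal (M * S) * (∫⁻ x', F x' ^ (2:ℝ) ∂μ) ^ ((1:ℝ)/2) := by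
          rw [ENNReal.mul_rpow_of_nonneg _ _ (by norm_num : (0:ℝ) ≤ (1:ℝ)/2),
            ← ENNReal.rpow_mul]
          norm_num
  have hmem : MemLp T 2 μ := by
    refine ⟨hTmeas.aestronglyMeasurable, ?_⟩
    refine lt_of_le_of_lt hnormT ?_
    exact ENNReal.mul_lt_top ENNReal.ofReal_lt_top hgL.2
  exact ⟨hmem, hnormT⟩


/-- on a metric measure space with uniform exponential volume growth
`μ(B(x,r)) ≤ C e^{κ r}`, if the kernels `K_p` satisfy
`|K_p(x,x')| ≤ C₁ p^N e^{-μ₀ √p d(x,x')}` with `μ₀ > 0`, then for any `0 < μ₁ < μ₀`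
there is `p₀` such that for `p > p₀`, `|α| ≤ μ₁ √p` and any `y`, the conjugated operator
with kernel `e^{α d(x,y)} K_p(x,x') e^{-α d(x',y)}` is bounded on `L²(X,μ)` with norm at
most `C₂ p^N`, where `C₂` is independent of `p`, `α` and `y`. -/
theorem conjugated_operator_bound
    {X : Type*} [MetricSpace X] [MeasurableSpace X] [BorelSpace X]
    (μ : Measure X) [SigmaFinite μ]
    (C κ : ℝ) (hC : 0 < C) (hκ : 0 < κ)
    (hvol : ∀ (x : X) (r : ℝ), 0 < r →
      μ (Metric.ball x r) ≤ ENNReal.ofReal (C * Real.exp (κ * r)))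
    (K : ℕ → X → X → ℂ) (hKmeas : ∀ p, Measurable (Function.uncurry (K p)))
    (C₁ μ₀ : ℝ) (N : ℕ) (hC₁ : 0 < C₁) (hμ₀ : 0 < μ₀)
    (hK : ∀ (p : ℕ) (x x' : X),
      ‖K p x x'‖ ≤ C₁ * (p : ℝ) ^ N * Real.exp (-μ₀ * Real.sqrt p * dist x x')) :
    ∀ μ₁ : ℝ, 0 < μ₁ → μ₁ < μ₀ →
      ∃ p₀ : ℕ, ∃ C₂ : ℝ, 0 < C₂ ∧
        ∀ p : ℕ, p₀ < p → ∀ α : ℝ, |α| ≤ μ₁ * Real.sqrt p → ∀ y : X,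
          ∀ f : X → ℂ, MemLp f 2 μ →
            MemLp (fun x => ∫ x',
              (Real.exp (α * dist x y) : ℂ) * K p x x' *
                (Real.exp (-α * dist x' y) : ℂ) * f x' ∂μ) 2 μ ∧
            eLpNorm (fun x => ∫ x',
                (Real.exp (α * dist x y) : ℂ) * K p x x' *
                  (Real.exp (-α * dist x' y) : ℂ) * f x' ∂μ) 2 μ ≤
              ENNReal.ofReal (C₂ * (p : ℝ) ^ N) * eLpNorm f 2 μ := by
  intro μ₁ hμ₁ hμ₁₀
  set ε := μ₀ - μ₁ with hε
  have hε0 : 0 < ε := by simp only [hε]; linarith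
  set S₀ : ℝ := C * Real.exp κ / (1 - Real.exp (-1)) with hS₀
  have h1e : (0:ℝ) < 1 - Real.exp (-1) := by
    have := Real.exp_lt_one_iff.2 (show (-1:ℝ) < 0 by norm_num)
    linarith
  have hS₀pos : 0 < S₀ := by
    rw [hS₀]; positivity
  refine ⟨⌈((κ + 1) / ε) ^ 2⌉₊, C₁ * S₀, by positivity, ?_⟩
  intro p hp α hα y f hf
  have hq : ((κ + 1) / ε) ^ 2 < (p:ℝ) := by
    calc ((κ + 1) / ε) ^ 2 ≤ (⌈((κ + 1) / ε) ^ 2⌉₊ : ℝ) := Nat.le_ceil _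
      _ < p := by exact_mod_cast hp
  have hsq : (κ + 1) / ε < Real.sqrt p := (Real.lt_sqrt (by positivity)).2 hq
  have hsp0 : 0 ≤ Real.sqrt p := Real.sqrt_nonneg _
  have ha : κ + 1 ≤ ε * Real.sqrt p := by
    have := (div_lt_iff₀ hε0).1 hsq
    linarith
  -- the conjugated kernel
  have hkmeas : Measurable (Function.uncurry fun x x' =>
      (Real.exp (α * dist x y) : ℂ) * K p x x' * (Real.exp (-α * dist x' y) : ℂ)) := by
    have m1 : Measurable fun x : X => (Real.exp (α * dist x y) : ℂ) :=
      Complex.measurable_ofReal.comp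
        (Real.continuous_exp.comp (continuous_const.mul (continuous_id.dist continuous_const))).measurable
    have m2 : Measurable fun x' : X => (Real.exp (-α * dist x' y) : ℂ) :=
      Complex.measurable_ofReal.comp
        (Real.continuous_exp.comp (continuous_const.mul (continuous_id.dist continuous_const))).measurable
    exact ((m1.comp measurable_fst).mul (hKmeas p)).mul (m2.comp measurable_snd)
  have hMnn : (0:ℝ) ≤ C₁ * (p:ℝ) ^ N := by positivity
  have hbound : ∀ x x', ‖(Real.exp (α * dist x y) : ℂ) * K p x x' *
      (Real.exp (-α * dist x' y) : ℂ)‖ ≤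
      (C₁ * (p:ℝ) ^ N) * Real.exp (-(ε * Real.sqrt p) * dist x x') := by
    intro x x'
    have hn : ‖(Real.exp (α * dist x y) : ℂ) * K p x x' * (Real.exp (-α * dist x' y) : ℂ)‖ =
        Real.exp (α * dist x y) * ‖K p x x'‖ * Real.exp (-α * dist x' y) := by
      rw [norm_mul, norm_mul, Complex.norm_real, Complex.norm_real, Real.norm_eq_abs,
        Real.norm_eq_abs, Real.abs_exp, Real.abs_exp]
    have habs : α * (dist x y - dist x' y) ≤ μ₁ * Real.sqrt p * dist x x' := by
      calc α * (dist x y - dist x' y) ≤ |α * (dist x y - dist x' y)| := le_abs_self _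
        _ = |α| * |dist x y - dist x' y| := abs_mul _ _
        _ ≤ (μ₁ * Real.sqrt p) * dist x x' :=
            mul_le_mul hα (abs_dist_sub_le x x' y) (abs_nonneg _) (by positivity)
    have h1 : ‖(Real.exp (α * dist x y) : ℂ) * K p x x' * (Real.exp (-α * dist x' y) : ℂ)‖ ≤
        Real.exp (α * dist x y) * (C₁ * (p:ℝ) ^ N *
          Real.exp (-μ₀ * Real.sqrt p * dist x x')) * Real.exp (-α * dist x' y) := by
      rw [hn]
      have hKx := hK p x x'
      have e1 := Real.exp_pos (α * dist x y)
      have e2 := Real.exp_pos (-α * dist x' y)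
      have := mul_le_mul_of_nonneg_left hKx e1.le
      have := mul_le_mul_of_nonneg_right this e2.le
      calc Real.exp (α * dist x y) * ‖K p x x'‖ * Real.exp (-α * dist x' y) ≤ _ := this
        _ = _ := by ring
    have h2 : Real.exp (α * dist x y) * (C₁ * (p:ℝ) ^ N *
        Real.exp (-μ₀ * Real.sqrt p * dist x x')) * Real.exp (-α * dist x' y) =
        (C₁ * (p:ℝ) ^ N) * Real.exp (α * dist x y + -μ₀ * Real.sqrt p * dist x x' +
          -α * dist x' y) := by
      rw [Real.exp_add, Real.exp_add]; ring
    have h3 : Real.exp (α * dist x y + -μ₀ * Real.sqrt p * dist x x' + -α * dist x' y) ≤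
        Real.exp (-(ε * Real.sqrt p) * dist x x') := by
      apply Real.exp_le_exp.2
      have : -(ε * Real.sqrt p) * dist x x' =
          μ₁ * Real.sqrt p * dist x x' + -μ₀ * Real.sqrt p * dist x x' := by
        rw [hε]; ring
      rw [this]
      nlinarith [habs]
    calc ‖(Real.exp (α * dist x y) : ℂ) * K p x x' * (Real.exp (-α * dist x' y) : ℂ)‖
        ≤ _ := h1
      _ = _ := h2
      _ ≤ (C₁ * (p:ℝ) ^ N) * Real.exp (-(ε * Real.sqrt p) * dist x x') :=
          mul_le_mul_of_nonneg_left h3 hMnn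
  have hSb : ∀ x : X, ∫⁻ x', ENNReal.ofReal
      (Real.exp (-(ε * Real.sqrt p) * dist x x')) ∂μ ≤ ENNReal.ofReal S₀ :=
    fun x => expint_bound μ C κ hC hvol (ε * Real.sqrt p) ha hκ x
  obtain ⟨h1, h2⟩ := schur_test μ
    (fun x x' => (Real.exp (α * dist x y) : ℂ) * K p x x' * (Real.exp (-α * dist x' y) : ℂ))
    hkmeas (C₁ * (p:ℝ) ^ N) (ε * Real.sqrt p) S₀ hMnn hS₀pos.le hbound hSb f hf
  refine ⟨h1, ?_⟩
  have : C₁ * (p:ℝ) ^ N * S₀ = C₁ * S₀ * (p:ℝ) ^ N := by ring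
  rw [this] at h2
  exact h2
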